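/- arXiv:2204.04448 — 2 statements merged into one kernel-verified Lean document; each statement's English description precedes it below -/
import Mathlib

section
/- Let Q be a finite faithful left quasigroup and N ≤ Dis(Q) an admissible semiregular subgroup with α = O_N. Then α = c_N and N = Dis_α = {L_y L_x^{-1} : y ∈ [x]_α} for every x ∈ Q. -/
/-! Basic theory of left quasigroups, following the paper. -/

structure LeftQuasigroup (Q : Type*) where
  op : Q → Q → Q
  ld : Q → Q → Q
  op_ld : ∀ x y, op x (ld x y) = y
  ld_op : ∀ x y, ld x (op x y) = y

/-- Orbit relation of a subgroup of permutations. -/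
def orbRel {Q : Type*} (N : Subgroup (Equiv.Perm Q)) (x y : Q) : Prop := ∃ h ∈ N, h y = x

/-- Orbit equivalence relation of a subgroup of permutations. -/
def orbSetoid {Q : Type*} (N : Subgroup (Equiv.Perm Q)) : Setoid Q where
  r := orbRel N
  iseqv := by
    constructor
    · exact fun x => ⟨1, N.one_mem, rfl⟩
    · rintro x y ⟨h, hN, rfl⟩
      exact ⟨h⁻¹, N.inv_mem hN, Equiv.symm_apply_apply h y⟩
    · rintro x y z ⟨h, hN, rfl⟩ ⟨g, gN, rfl⟩
      exact ⟨h * g, N.mul_mem hN gN, rfl⟩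

/-- The subgroup of permutations moving every point inside its `α`-class. -/
def kerRel {Q : Type*} (α : Setoid Q) : Subgroup (Equiv.Perm Q) where
  carrier := {g | ∀ x, α.r (g x) x}
  one_mem' := fun x => α.refl x
  mul_mem' := by
    intro a b ha hb x
    exact α.trans (ha (b x)) (hb x)
  inv_mem' := by
    intro a ha x
    have := ha (a⁻¹ x)
    rw [← Equiv.Perm.mul_apply, mul_inv_cancel, Equiv.Perm.one_apply] at this
    exact α.symm this

/-- Pointwise stabilizer of `x` in `N`. -/
def pstab {Q : Type*} (N : Subgroup (Equiv.Perm Q)) (x : Q) : Subgroup (Equiv.Perm Q) :=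
  N ⊓ MulAction.stabilizer (Equiv.Perm Q) x

/-- Meet of a family of setoids. -/
def infSetoid {Q I : Type*} (α : I → Setoid Q) : Setoid Q where
  r x y := ∀ i, (α i).r x y
  iseqv := ⟨fun x i => (α i).refl x, fun h i => (α i).symm (h i),
    fun h g i => (α i).trans (h i) (g i)⟩

namespace LeftQuasigroup

variable {Q : Type*} (S : LeftQuasigroup Q)

/-- Left translation as a permutation. -/
def L (x : Q) : Equiv.Perm Q := ⟨S.op x, S.ld x, S.ld_op x, S.op_ld x⟩

/-- The left multiplication group. -/
def LMlt : Subgroup (Equiv.Perm Q) := Subgroup.closure (Set.range S.L)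

/-- The displacement group relative to a binary relation `r`. -/
def disRel (r : Q → Q → Prop) : Subgroup (Equiv.Perm Q) :=
  Subgroup.closure {g | ∃ h ∈ S.LMlt, ∃ x y, r x y ∧ g = h * (S.L x * (S.L y)⁻¹) * h⁻¹}

/-- The displacement group. -/
def Dis : Subgroup (Equiv.Perm Q) := S.disRel fun _ _ => True

/-- `Dis^α`. -/
def disUp (α : Setoid Q) : Subgroup (Equiv.Perm Q) := S.Dis ⊓ kerRel α

/-- `LMlt^α`, the kernel of `π_α`. -/
def lmltKer (α : Setoid Q) : Subgroup (Equiv.Perm Q) := S.LMlt ⊓ kerRel α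

/-- Congruences of a left quasigroup. -/
structure IsCongruence (α : Setoid Q) : Prop where
  op_compat : ∀ {x y z w : Q}, α.r x y → α.r z w → α.r (S.op x z) (S.op y w)
  ld_compat : ∀ {x y z w : Q}, α.r x y → α.r z w → α.r (S.ld x z) (S.ld y w)

theorem L_mem_lmlt (x : Q) : S.L x ∈ S.LMlt := Subgroup.subset_closure ⟨x, rfl⟩

theorem disRel_le_lmlt (r : Q → Q → Prop) : S.disRel r ≤ S.LMlt := by
  refine (Subgroup.closure_le _).2 ?_
  rintro g ⟨h, hh, x, y, _, rfl⟩
  exact mul_mem (mul_mem hh (mul_mem (S.L_mem_lmlt x) (inv_mem (S.L_mem_lmlt y)))) (inv_mem hh)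

theorem lmlt_maps {α : Setoid Q} (hα : S.IsCongruence α) {g : Equiv.Perm Q}
    (hg : g ∈ S.LMlt) : ∀ x y, α.r x y → α.r (g x) (g y) := by
  have H : ∀ g ∈ S.LMlt,
      (∀ x y, α.r x y → α.r (g x) (g y)) ∧ (∀ x y, α.r x y → α.r (g⁻¹ x) (g⁻¹ y)) := by
    intro g hg
    induction hg using Subgroup.closure_induction with
    | mem g hgen =>
      obtain ⟨z, rfl⟩ := hgen
      constructor
      · intro x y h; exact hα.op_compat (α.refl z) h
      · intro x y h; exact hα.ld_compat (α.refl z) h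
    | one =>
      constructor <;> intro x y h <;> simpa using h
    | mul a b _ _ ha hb =>
      constructor
      · intro x y h
        exact ha.1 _ _ (hb.1 _ _ h)
      · intro x y h
        have := hb.2 _ _ (ha.2 _ _ h)
        simpa [mul_inv_rev] using this
    | inv a _ ha =>
      refine ⟨ha.2, ?_⟩
      intro x y h
      simpa using ha.1 x y h
  exact (H g hg).1

/-- The blockwise stabilizer `Dis(Q)_{[x]_α}`. -/
def blockStab (α : Setoid Q) (hα : S.IsCongruence α) (x : Q) : Subgroup (Equiv.Perm Q) where
  carrier := {g | g ∈ S.Dis ∧ α.r (g x) x}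
  one_mem' := ⟨S.Dis.one_mem, α.refl x⟩
  mul_mem' := by
    intro a b ha hb
    refine ⟨S.Dis.mul_mem ha.1 hb.1, ?_⟩
    exact α.trans (S.lmlt_maps hα (S.disRel_le_lmlt _ ha.1) _ _ hb.2) ha.2
  inv_mem' := by
    intro a ha
    refine ⟨S.Dis.inv_mem ha.1, ?_⟩
    have h2 := S.lmlt_maps hα (inv_mem (S.disRel_le_lmlt _ ha.1)) _ _ ha.2
    rw [← Equiv.Perm.mul_apply, inv_mul_cancel, Equiv.Perm.one_apply] at h2
    exact α.symm h2

/-- The admissible subgroups `Norm(Q)`. -/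
def Norm : Set (Subgroup (Equiv.Perm Q)) :=
  {N | N ≤ S.LMlt ∧ (∀ h ∈ S.LMlt, ∀ n ∈ N, h * n * h⁻¹ ∈ N) ∧ S.disRel (orbRel N) ≤ N}

/-- Image of a subgroup along the canonical projection `π_α`. -/
def piSub (α : Setoid Q) (N : Subgroup (Equiv.Perm Q)) : Subgroup (Equiv.Perm (Quotient α)) where
  carrier := {k | ∃ h ∈ N, ∀ x : Q, k (Quotient.mk α x) = Quotient.mk α (h x)}
  one_mem' := ⟨1, N.one_mem, fun _ => rfl⟩
  mul_mem' := by
    rintro a b ⟨ha, haN, hae⟩ ⟨hb, hbN, hbe⟩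
    refine ⟨ha * hb, N.mul_mem haN hbN, fun x => ?_⟩
    show a (b (Quotient.mk α x)) = _
    rw [hbe, hae]; rfl
  inv_mem' := by
    rintro a ⟨h, hN, he⟩
    refine ⟨h⁻¹, N.inv_mem hN, fun x => ?_⟩
    have h1 := he (h⁻¹ x)
    rw [← Equiv.Perm.mul_apply, mul_inv_cancel, Equiv.Perm.one_apply] at h1
    rw [← h1, ← Equiv.Perm.mul_apply, inv_mul_cancel, Equiv.Perm.one_apply]

/-- Preimage of a subgroup along the canonical projection `π_α`. -/
def piPre (α : Setoid Q) (K : Subgroup (Equiv.Perm (Quotient α))) : Subgroup (Equiv.Perm Q) where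
  carrier := {h | h ∈ S.LMlt ∧ ∃ k ∈ K, ∀ x : Q, k (Quotient.mk α x) = Quotient.mk α (h x)}
  one_mem' := ⟨S.LMlt.one_mem, 1, K.one_mem, fun _ => rfl⟩
  mul_mem' := by
    rintro a b ⟨haL, ka, kaK, hae⟩ ⟨hbL, kb, kbK, hbe⟩
    refine ⟨S.LMlt.mul_mem haL hbL, ka * kb, K.mul_mem kaK kbK, fun x => ?_⟩
    show ka (kb (Quotient.mk α x)) = _
    rw [hbe, hae]; rfl
  inv_mem' := by
    rintro a ⟨haL, k, kK, he⟩
    refine ⟨S.LMlt.inv_mem haL, k⁻¹, K.inv_mem kK, fun x => ?_⟩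
    have h1 := he (a⁻¹ x)
    rw [← Equiv.Perm.mul_apply, mul_inv_cancel, Equiv.Perm.one_apply] at h1
    rw [← h1, ← Equiv.Perm.mul_apply, inv_mul_cancel, Equiv.Perm.one_apply]

/-- Quotient left quasigroup. -/
def quotLQ (α : Setoid Q) (hα : S.IsCongruence α) : LeftQuasigroup (Quotient α) where
  op := Quotient.lift₂ (fun x y => Quotient.mk α (S.op x y))
    (fun _ _ _ _ h1 h2 => Quotient.sound (hα.op_compat h1 h2))
  ld := Quotient.lift₂ (fun x y => Quotient.mk α (S.ld x y))
    (fun _ _ _ _ h1 h2 => Quotient.sound (hα.ld_compat h1 h2))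
  op_ld := fun a b => Quotient.inductionOn₂ a b fun x y => congrArg (Quotient.mk α) (S.op_ld x y)
  ld_op := fun a b => Quotient.inductionOn₂ a b fun x y => congrArg (Quotient.mk α) (S.ld_op x y)

/-- Idempotent left quasigroup. -/
def Idem : Prop := ∀ x : Q, S.op x x = x

/-- Left distributive law (defining quandles among idempotent left quasigroups). -/
def Ldist : Prop := ∀ x y z : Q, S.op x (S.op y z) = S.op (S.op x y) (S.op x z)

/-- A left quasigroup is faithful if the Cayley kernel is trivial. -/
def Faithful : Prop := ∀ x y : Q, (∀ z, S.op x z = S.op y z) → x = y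

/-- Connected: `LMlt` acts transitively. -/
def Connected : Prop := ∀ x y : Q, ∃ h ∈ S.LMlt, h y = x

/-- Semiregular: `Dis` acts with trivial stabilizers. -/
def Semiregular : Prop := ∀ g ∈ S.Dis, ∀ x : Q, g x = x → g = 1

/-- Subalgebras. -/
def IsSubalgebra (A : Set Q) : Prop :=
  ∀ ⦃x⦄, x ∈ A → ∀ ⦃y⦄, y ∈ A → S.op x y ∈ A ∧ S.ld x y ∈ A

/-- The left quasigroup structure on a subalgebra. -/
def subLQ (A : Set Q) (hA : S.IsSubalgebra A) : LeftQuasigroup A where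
  op a b := ⟨S.op a b, (hA a.2 b.2).1⟩
  ld a b := ⟨S.ld a b, (hA a.2 b.2).2⟩
  op_ld a b := Subtype.ext (S.op_ld a b)
  ld_op a b := Subtype.ext (S.ld_op a b)

/-- Superconnected: every subalgebra is connected. -/
def Superconnected : Prop := ∀ (A : Set Q) (hA : S.IsSubalgebra A), (S.subLQ A hA).Connected

/-- Superfaithful: every subalgebra is faithful. -/
def Superfaithful : Prop := ∀ (A : Set Q) (hA : S.IsSubalgebra A), (S.subLQ A hA).Faithful

theorem infCong {I : Type*} {α : I → Setoid Q} (hc : ∀ i, S.IsCongruence (α i)) :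
    S.IsCongruence (infSetoid α) :=
  ⟨fun h1 h2 i => (hc i).op_compat (h1 i) (h2 i),
   fun h1 h2 i => (hc i).ld_compat (h1 i) (h2 i)⟩

end LeftQuasigroup

/-- Terms in the language of left quasigroups in `n` variables. -/
inductive LQTerm : ℕ → Type
  | var : ∀ {n}, Fin n → LQTerm n
  | op : ∀ {n}, LQTerm n → LQTerm n → LQTerm n
  | ld : ∀ {n}, LQTerm n → LQTerm n → LQTerm n

/-- Evaluation of terms. -/
def evalT {Q : Type*} (S : LeftQuasigroup Q) : ∀ {n}, LQTerm n → (Fin n → Q) → Q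
  | _, .var i, v => v i
  | _, .op t s, v => S.op (evalT S t v) (evalT S s v)
  | _, .ld t s, v => S.ld (evalT S t v) (evalT S s v)

/-- The centralizing relation `C(a, b; d)` of commutator theory. -/
def CC {Q : Type*} (S : LeftQuasigroup Q) (a b d : Q → Q → Prop) : Prop :=
  ∀ (n : ℕ) (t : LQTerm (n + 1)) (x y : Q) (z u : Fin n → Q),
    a x y → (∀ i, b (z i) (u i)) →
    d (evalT S t (Fin.cons x z)) (evalT S t (Fin.cons x u)) →
    d (evalT S t (Fin.cons y z)) (evalT S t (Fin.cons y u))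

/-- Nilpotency of length `n` in the sense of commutator theory: the ascending central
series (characterized congruence by congruence) reaches the full congruence at step `n`. -/
def LeftQuasigroup.NilpotentLength {Q : Type*} (S : LeftQuasigroup Q) (n : ℕ) : Prop :=
  ∃ c : ℕ → Setoid Q,
    (∀ k, S.IsCongruence (c k)) ∧
    (∀ x y : Q, (c 0).r x y ↔ x = y) ∧
    (∀ k, ∀ β : Setoid Q, S.IsCongruence β →
      (CC S β.r (fun _ _ => True) (c k).r ↔ β ≤ c (k + 1))) ∧
    (∀ x y : Q, (c n).r x y)


/-- for a finite faithful `Q` and semiregular admissible `N ≤ Dis(Q)`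
with `α = O_N`: `α = c_N` and `N = Dis_α = {L_y L_x⁻¹ : y ∈ [x]_α}` for every `x`. -/
theorem stmt14 {Q : Type*} [Finite Q] (S : LeftQuasigroup Q) (hf : S.Faithful)
    (N : Subgroup (Equiv.Perm Q)) (hN : N ∈ S.Norm) (hle : N ≤ S.Dis)
    (hsemi : ∀ g ∈ N, ∀ x : Q, g x = x → g = 1) :
    (∀ x y : Q, orbRel N x y ↔ S.L x * (S.L y)⁻¹ ∈ N) ∧
    N = S.disRel (orbRel N) ∧
    ∀ x : Q, (N : Set (Equiv.Perm Q)) = {g | ∃ y, orbRel N y x ∧ g = S.L y * (S.L x)⁻¹} := by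
  have hfL : ∀ y z : Q, S.L y = S.L z → y = z := by
    intro y z h
    exact hf y z fun w => congrFun (congrArg (fun e : Equiv.Perm Q => (e : Q → Q)) h) w
  have key : ∀ x y : Q, orbRel N y x → S.L y * (S.L x)⁻¹ ∈ N := by
    intro x y hyx
    exact hN.2.2 (Subgroup.subset_closure ⟨1, S.LMlt.one_mem, y, x, hyx, by group⟩)
  have surj : ∀ x : Q, ∀ g ∈ N, ∃ y, orbRel N y x ∧ g = S.L y * (S.L x)⁻¹ := by
    intro x g hg
    set f : ↥N → ↥N := fun n => ⟨S.L (n.1 x) * (S.L x)⁻¹, key x _ ⟨n.1, n.2, rfl⟩⟩ with hfdef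
    have hinj : Function.Injective f := by
      intro a b hab
      have h0 : S.L (a.1 x) * (S.L x)⁻¹ = S.L (b.1 x) * (S.L x)⁻¹ :=
        congrArg Subtype.val hab
      have h1 : S.L (a.1 x) = S.L (b.1 x) := mul_right_cancel h0
      have h2 : a.1 x = b.1 x := hfL _ _ h1
      have h3 : (b.1⁻¹ * a.1) x = x := by
        show b.1⁻¹ (a.1 x) = x
        rw [h2, ← Equiv.Perm.mul_apply, inv_mul_cancel, Equiv.Perm.one_apply]
      have h4 := hsemi _ (N.mul_mem (N.inv_mem b.2) a.2) x h3
      exact Subtype.ext (inv_mul_eq_one.mp h4).symm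
    obtain ⟨n, hn⟩ := (Finite.injective_iff_surjective.mp hinj) ⟨g, hg⟩
    exact ⟨n.1 x, ⟨n.1, n.2, rfl⟩, (congrArg Subtype.val hn).symm⟩
  refine ⟨?_, ?_, ?_⟩
  · intro x y
    constructor
    · exact key y x
    · intro hm
      obtain ⟨z, hz, heq⟩ := surj y _ hm
      have : x = z := hfL _ _ (mul_right_cancel heq)
      exact this ▸ hz
  · refine le_antisymm ?_ hN.2.2
    intro g hg
    rcases isEmpty_or_nonempty Q with hE | hNE
    · have : g = 1 := Equiv.ext fun a => isEmptyElim a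
      exact this ▸ (S.disRel (orbRel N)).one_mem
    · obtain ⟨x⟩ := hNE
      obtain ⟨y, hy, rfl⟩ := surj x g hg
      exact Subgroup.subset_closure ⟨1, S.LMlt.one_mem, y, x, hy, by group⟩
  · intro x
    ext g
    constructor
    · intro hg
      obtain ⟨y, hy, heq⟩ := surj x g hg
      exact ⟨y, hy, heq⟩
    · rintro ⟨y, hy, rfl⟩
      exact key x y hy
end

section
/- Let Q be a superconnected idempotent left quasigroup. If Q is nilpotent of length n, then Dis(Q) is solvable of derived length at most n. -/
open scoped commutatorElement

section Stmt18Aux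

namespace Stmt18Aux

variable {Q : Type*} (S : LeftQuasigroup Q)

/-- Words in left translations: letter `(a, true)` means `L a`, `(a, false)` means `L a⁻¹`. -/
abbrev Wd (Q : Type*) := List (Q × Bool)

def wEv (l : Wd Q) (v : Q) : Q :=
  l.foldr (fun ab v => if ab.2 then S.op ab.1 v else S.ld ab.1 v) v

def wInv (l : Wd Q) : Wd Q := (l.map (fun ab => (ab.1, !ab.2))).reverse

@[simp] lemma wEv_nil (v : Q) : wEv S [] v = v := rfl

lemma wEv_cons (a : Q × Bool) (l : Wd Q) (v : Q) :
    wEv S (a :: l) v = wEv S [a] (wEv S l v) := rfl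

lemma wEv_append (l₁ l₂ : Wd Q) (v : Q) :
    wEv S (l₁ ++ l₂) v = wEv S l₁ (wEv S l₂ v) := by
  simp [wEv, List.foldr_append]

lemma wInv_cons (a : Q × Bool) (l : Wd Q) :
    wInv (a :: l) = wInv l ++ [(a.1, !a.2)] := by
  simp [wInv]

lemma wInv_wInv (l : Wd Q) : wInv (wInv l) = l := by
  simp [wInv, List.map_reverse, List.map_map, Function.comp_def, Bool.not_not]

lemma wEv_single_inv (a : Q × Bool) (v : Q) :
    wEv S [(a.1, !a.2)] (wEv S [a] v) = v := by
  rcases a with ⟨a, b⟩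
  cases b <;> simp [wEv, S.op_ld, S.ld_op]

lemma wEv_wInv (l : Wd Q) (v : Q) : wEv S (wInv l) (wEv S l v) = v := by
  induction l generalizing v with
  | nil => rfl
  | cons a l ih =>
    rw [wEv_cons, wInv_cons, wEv_append, wEv_single_inv, ih]

lemma wEv_wInv' (l : Wd Q) (v : Q) : wEv S l (wEv S (wInv l) v) = v := by
  have := wEv_wInv S (wInv l) v
  rwa [wInv_wInv] at this

lemma wEv_inj (l : Wd Q) {a b : Q} (h : wEv S l a = wEv S l b) : a = b := by
  have := congrArg (wEv S (wInv l)) h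
  rwa [wEv_wInv, wEv_wInv] at this

lemma wEv_cong {α : Setoid Q} (hα : S.IsCongruence α) (l : Wd Q) {u v : Q}
    (h : α.r u v) : α.r (wEv S l u) (wEv S l v) := by
  induction l with
  | nil => exact h
  | cons a l ih =>
    rcases a with ⟨a, b⟩
    cases b
    · exact hα.ld_compat (α.refl a) ih
    · exact hα.op_compat (α.refl a) ih

/-- Every element of `LMlt` is the evaluation of a word. -/
lemma lmlt_word {g : Equiv.Perm Q} (hg : g ∈ S.LMlt) :
    ∃ l : Wd Q, ∀ v, g v = wEv S l v := by
  induction hg using Subgroup.closure_induction with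
  | mem g hgen =>
    obtain ⟨x, rfl⟩ := hgen
    exact ⟨[(x, true)], fun v => rfl⟩
  | one => exact ⟨[], fun v => rfl⟩
  | mul a b _ _ ha hb =>
    obtain ⟨la, hla⟩ := ha
    obtain ⟨lb, hlb⟩ := hb
    refine ⟨la ++ lb, fun v => ?_⟩
    rw [wEv_append, ← hlb, ← hla]
    rfl
  | inv a _ ha =>
    obtain ⟨la, hla⟩ := ha
    refine ⟨wInv la, fun v => ?_⟩
    have h1 : a (wEv S (wInv la) v) = v := by rw [hla, wEv_wInv']
    have := congrArg (⇑a⁻¹) h1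
    rw [Equiv.Perm.coe_inv, Equiv.symm_apply_apply] at this
    exact this.symm

lemma word_inv {g : Equiv.Perm Q} {l : Wd Q} (h : ∀ v, g v = wEv S l v) :
    ∀ v, g⁻¹ v = wEv S (wInv l) v := by
  intro v
  have h1 : g (wEv S (wInv l) v) = v := by rw [h, wEv_wInv']
  have := congrArg (⇑g⁻¹) h1
  rw [Equiv.Perm.coe_inv, Equiv.symm_apply_apply] at this
  exact this.symm

/-- Displacement words: each entry `(k, p, q)` denotes the generator `k L_p L_q⁻¹ k⁻¹`. -/
abbrev GW (Q : Type*) := List (Wd Q × Q × Q)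

/-- Evaluation of a single generator. -/
def gops (c : Wd Q × Q × Q) (v : Q) : Q :=
  wEv S c.1 (S.op c.2.1 (S.ld c.2.2 (wEv S (wInv c.1) v)))

def gEv (L : GW Q) (v : Q) : Q := L.foldr (fun c v => gops S c v) v

@[simp] lemma gEv_nil (v : Q) : gEv S [] v = v := rfl

lemma gEv_cons (c : Wd Q × Q × Q) (L : GW Q) (v : Q) :
    gEv S (c :: L) v = gops S c (gEv S L v) := rfl

lemma gEv_append (L₁ L₂ : GW Q) (v : Q) :
    gEv S (L₁ ++ L₂) v = gEv S L₁ (gEv S L₂ v) := by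
  simp [gEv, List.foldr_append]

@[simp] lemma gEv_single (c : Wd Q × Q × Q) (v : Q) : gEv S [c] v = gops S c v := rfl

def gInv (L : GW Q) : GW Q := (L.map (fun c => (c.1, c.2.2, c.2.1))).reverse

lemma gInv_cons (c : Wd Q × Q × Q) (L : GW Q) :
    gInv (c :: L) = gInv L ++ [(c.1, c.2.2, c.2.1)] := by
  simp [gInv]

lemma gInv_gInv (L : GW Q) : gInv (gInv L) = L := by
  simp [gInv, List.map_reverse, List.map_map, Function.comp_def]

lemma gops_inv (c : Wd Q × Q × Q) (v : Q) :
    gops S (c.1, c.2.2, c.2.1) (gops S c v) = v := by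
  rcases c with ⟨k, p, q⟩
  simp only [gops, wEv_wInv, S.ld_op, S.op_ld, wEv_wInv']

lemma gEv_gInv (L : GW Q) (v : Q) : gEv S (gInv L) (gEv S L v) = v := by
  induction L generalizing v with
  | nil => rfl
  | cons c L ih =>
    rw [gEv_cons, gInv_cons, gEv_append, gEv_single, gops_inv, ih]

lemma gEv_gInv' (L : GW Q) (v : Q) : gEv S L (gEv S (gInv L) v) = v := by
  have := gEv_gInv S (gInv L) v
  rwa [gInv_gInv] at this

lemma gops_cong {α : Setoid Q} (hα : S.IsCongruence α) (c : Wd Q × Q × Q) {u v : Q}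
    (h : α.r u v) : α.r (gops S c u) (gops S c v) :=
  wEv_cong S hα _ (hα.op_compat (α.refl _) (hα.ld_compat (α.refl _) (wEv_cong S hα _ h)))

lemma gEv_cong {α : Setoid Q} (hα : S.IsCongruence α) (L : GW Q) {u v : Q}
    (h : α.r u v) : α.r (gEv S L u) (gEv S L v) := by
  induction L with
  | nil => exact h
  | cons c L ih => exact gops_cong S hα c ih

/-- Every element of `disRel r` (for symmetric `r`) is the evaluation of a displacement
word whose pairs are `r`-related. -/
lemma disRel_word {r : Q → Q → Prop} (hsymm : ∀ a b, r a b → r b a) {g : Equiv.Perm Q}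
    (hg : g ∈ S.disRel r) :
    ∃ L : GW Q, (∀ c ∈ L, r c.2.1 c.2.2) ∧ ∀ v, g v = gEv S L v := by
  induction hg using Subgroup.closure_induction with
  | mem g hgen =>
    obtain ⟨h, hh, x, y, hr, rfl⟩ := hgen
    obtain ⟨l, hl⟩ := lmlt_word S hh
    refine ⟨[(l, x, y)], by simpa using hr, fun v => ?_⟩
    have h1 : ∀ w, (S.L y)⁻¹ w = S.ld y w := fun w => rfl
    have h2 : ∀ w, h⁻¹ w = wEv S (wInv l) w := word_inv S hl
    simp only [Equiv.Perm.mul_apply, gEv_single, gops]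
    rw [h1, h2, hl]
    rfl
  | one => exact ⟨[], by simp, fun v => rfl⟩
  | mul a b _ _ ha hb =>
    obtain ⟨La, hLa, hLa2⟩ := ha
    obtain ⟨Lb, hLb, hLb2⟩ := hb
    refine ⟨La ++ Lb, ?_, fun v => ?_⟩
    · intro c hc
      rcases List.mem_append.1 hc with h | h
      · exact hLa c h
      · exact hLb c h
    · rw [gEv_append, ← hLb2, ← hLa2]; rfl
  | inv a _ ha =>
    obtain ⟨La, hLa, hLa2⟩ := ha
    refine ⟨gInv La, ?_, fun v => ?_⟩
    · intro c hc
      simp only [gInv, List.mem_reverse, List.mem_map] at hc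
      obtain ⟨c', hc', rfl⟩ := hc
      exact hsymm _ _ (hLa c' hc')
    · have h1 : a (gEv S (gInv La) v) = v := by rw [hLa2, gEv_gInv']
      have := congrArg (⇑a⁻¹) h1
      rw [Equiv.Perm.coe_inv, Equiv.symm_apply_apply] at this
      exact this.symm

lemma gEv_inv_of {g : Equiv.Perm Q} {L : GW Q} (h : ∀ v, g v = gEv S L v) :
    ∀ v, g⁻¹ v = gEv S (gInv L) v := by
  intro v
  have h1 : g (gEv S (gInv L) v) = v := by rw [h, gEv_gInv']
  have := congrArg (⇑g⁻¹) h1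
  rw [Equiv.Perm.coe_inv, Equiv.symm_apply_apply] at this
  exact this.symm

/-- Terms with a distinguished variable `pt` and self-describing pair variables:
`cv (a, b)` evaluates to `a` under `Prod.fst` and `b` under `Prod.snd`. -/
inductive TT (Q : Type*) where
  | pt : TT Q
  | cv : Q × Q → TT Q
  | op : TT Q → TT Q → TT Q
  | ld : TT Q → TT Q → TT Q

def tEv (x : Q) (f : Q × Q → Q) : TT Q → Q
  | .pt => x
  | .cv a => f a
  | .op t s => S.op (tEv x f t) (tEv x f s)
  | .ld t s => S.ld (tEv x f t) (tEv x f s)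

def flatT : TT Q → List (Q × Q)
  | .pt => []
  | .cv a => [a]
  | .op t s => flatT t ++ flatT s
  | .ld t s => flatT t ++ flatT s

def convT (n : ℕ) : TT Q → ℕ → LQTerm (n + 1) × ℕ
  | .pt, o => (.var 0, o)
  | .cv _, o => (if h : o + 1 < n + 1 then .var ⟨o + 1, h⟩ else .var 0, o + 1)
  | .op t s, o =>
    let p := convT n t o
    let q := convT n s p.2
    (.op p.1 q.1, q.2)
  | .ld t s, o =>
    let p := convT n t o
    let q := convT n s p.2
    (.ld p.1 q.1, q.2)

lemma convT_snd (n : ℕ) (t : TT Q) (o : ℕ) :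
    (convT n t o).2 = o + (flatT t).length := by
  induction t generalizing o with
  | pt => simp [convT, flatT]
  | cv a => simp [convT, flatT]
  | op t s iht ihs => simp [convT, flatT, iht, ihs]; omega
  | ld t s iht ihs => simp [convT, flatT, iht, ihs]; omega

def condL {Q' : Type*} (n : ℕ) (D : List (Q' × Q')) (f : Q' × Q' → Q') (z : Fin n → Q')
    (o : ℕ) : Prop :=
  ∀ (i : ℕ) (h1 : i < D.length) (h2 : o + i < n), z ⟨o + i, h2⟩ = f (D.get ⟨i, h1⟩)

lemma get_append_l {α : Type*} (l₁ l₂ : List α) (i : ℕ) (h : i < l₁.length)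
    (h' : i < (l₁ ++ l₂).length) : (l₁ ++ l₂).get ⟨i, h'⟩ = l₁.get ⟨i, h⟩ := by
  rw [List.get_eq_getElem, List.get_eq_getElem, List.getElem_append_left h]

lemma get_append_r {α : Type*} (l₁ l₂ : List α) (i : ℕ) (h : i < l₂.length)
    (h' : l₁.length + i < (l₁ ++ l₂).length) :
    (l₁ ++ l₂).get ⟨l₁.length + i, h'⟩ = l₂.get ⟨i, h⟩ := by
  rw [List.get_eq_getElem, List.get_eq_getElem,
    List.getElem_append_right (Nat.le_add_right l₁.length i)]
  have hh : l₁.length + i - l₁.length = i := by omega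
  simp only [hh]

lemma condL_append_left {Q' : Type*} {n : ℕ} {D₁ D₂ : List (Q' × Q')} {f z o}
    (h : condL n (D₁ ++ D₂) f z o) : condL n D₁ f z o := by
  intro i h1 h2
  rw [h i (by simp; omega) h2]
  exact congrArg f (get_append_l D₁ D₂ i h1 _)

lemma condL_append_right {Q' : Type*} {n : ℕ} {D₁ D₂ : List (Q' × Q')} {f z o}
    (h : condL n (D₁ ++ D₂) f z o) : condL n D₂ f z (o + D₁.length) := by
  intro i h1 h2
  have h2' : o + (D₁.length + i) < n := by omega
  have hfin : (⟨o + D₁.length + i, h2⟩ : Fin n) = ⟨o + (D₁.length + i), h2'⟩ :=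
    Fin.ext (show o + D₁.length + i = o + (D₁.length + i) by omega)
  rw [hfin, h (D₁.length + i) (by simp; omega) h2']
  exact congrArg f (get_append_r D₁ D₂ i h1 _)

lemma convT_eval (n : ℕ) (t : TT Q) (x : Q) (f : Q × Q → Q) (z : Fin n → Q) :
    ∀ (o : ℕ), o + (flatT t).length ≤ n → condL n (flatT t) f z o →
    evalT S (convT n t o).1 (Fin.cons x z) = tEv S x f t := by
  induction t with
  | pt =>
    intro o _ _
    have hc : (convT n (TT.pt : TT Q) o).1 = LQTerm.var 0 := rfl
    rw [hc]
    simp only [evalT, tEv]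
    simp
  | cv a =>
    intro o hle hz
    have h : o + 1 < n + 1 := by simp [flatT] at hle; omega
    have ho : o < n := by omega
    have key : (⟨o + 1, h⟩ : Fin (n + 1)) = Fin.succ ⟨o, ho⟩ := by
      apply Fin.ext; rfl
    simp only [convT, dif_pos h, key]
    simp only [evalT, tEv, Fin.cons_succ]
    have h2 : o + 0 < n := by omega
    have hv := hz 0 (by simp [flatT]) h2
    have hfin : (⟨o, ho⟩ : Fin n) = ⟨o + 0, h2⟩ := Fin.ext (show o = o + 0 by omega)
    rw [hfin, hv]
    rfl
  | op t s iht ihs =>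
    intro o hle hz
    simp only [flatT, List.length_append] at hle
    have hzt : condL n (flatT t) f z o := condL_append_left hz
    have hzs : condL n (flatT s) f z (o + (flatT t).length) := condL_append_right hz
    have ht := iht o (by omega) hzt
    have hs := ihs (o + (flatT t).length) (by omega) hzs
    have hc : (convT n (TT.op t s) o).1
        = LQTerm.op (convT n t o).1 (convT n s (convT n t o).2).1 := rfl
    rw [hc]
    simp only [evalT, tEv]
    rw [ht, convT_snd, hs]
  | ld t s iht ihs =>
    intro o hle hz
    simp only [flatT, List.length_append] at hle
    have hzt : condL n (flatT t) f z o := condL_append_left hz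
    have hzs : condL n (flatT s) f z (o + (flatT t).length) := condL_append_right hz
    have ht := iht o (by omega) hzt
    have hs := ihs (o + (flatT t).length) (by omega) hzs
    have hc : (convT n (TT.ld t s) o).1
        = LQTerm.ld (convT n t o).1 (convT n s (convT n t o).2).1 := rfl
    rw [hc]
    simp only [evalT, tEv]
    rw [ht, convT_snd, hs]

/-- Transfer along the centralizing relation, for arbitrary `TT`-terms. -/
lemma ccT {a d : Q → Q → Prop} (hcc : CC S a (fun _ _ => True) d) (t : TT Q) {x y : Q}
    (hxy : a x y) (f g : Q × Q → Q)
    (h : d (tEv S x f t) (tEv S x g t)) : d (tEv S y f t) (tEv S y g t) := by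
  have hcondz : condL (flatT t).length (flatT t) f (fun i => f ((flatT t).get i)) 0 := by
    intro i h1 h2
    show f ((flatT t).get ⟨0 + i, h2⟩) = f ((flatT t).get ⟨i, h1⟩)
    have heq : (⟨0 + i, h2⟩ : Fin (flatT t).length) = ⟨i, h1⟩ :=
      Fin.ext (show 0 + i = i by omega)
    rw [heq]
  have hcondu : condL (flatT t).length (flatT t) g (fun i => g ((flatT t).get i)) 0 := by
    intro i h1 h2
    show g ((flatT t).get ⟨0 + i, h2⟩) = g ((flatT t).get ⟨i, h1⟩)
    have heq : (⟨0 + i, h2⟩ : Fin (flatT t).length) = ⟨i, h1⟩ :=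
      Fin.ext (show 0 + i = i by omega)
    rw [heq]
  have ez := convT_eval S (flatT t).length t x f (fun i => f ((flatT t).get i)) 0
    (by omega) hcondz
  have eu := convT_eval S (flatT t).length t x g (fun i => g ((flatT t).get i)) 0
    (by omega) hcondu
  have ez' := convT_eval S (flatT t).length t y f (fun i => f ((flatT t).get i)) 0
    (by omega) hcondz
  have eu' := convT_eval S (flatT t).length t y g (fun i => g ((flatT t).get i)) 0
    (by omega) hcondu
  have key := hcc (flatT t).length (convT (flatT t).length t 0).1 x y
    (fun i => f ((flatT t).get i)) (fun i => g ((flatT t).get i)) hxy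
    (fun _ => trivial) (by rw [ez, eu]; exact h)
  rwa [ez', eu'] at key

def wTT (l : Wd Q) (t : TT Q) : TT Q :=
  l.foldr (fun ab t' =>
    if ab.2 then TT.op (.cv (ab.1, ab.1)) t' else TT.ld (.cv (ab.1, ab.1)) t') t

lemma tEv_wTT (l : Wd Q) (t : TT Q) (x : Q) (f : Q × Q → Q) (hf : ∀ a : Q, f (a, a) = a) :
    tEv S x f (wTT l t) = wEv S l (tEv S x f t) := by
  induction l with
  | nil => rfl
  | cons ab l ih =>
    rcases ab with ⟨a, b⟩
    cases b
    · show tEv S x f (TT.ld (.cv (a, a)) (wTT l t)) = wEv S ((a, false) :: l) (tEv S x f t)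
      simp only [tEv]
      rw [hf, ih]
      rfl
    · show tEv S x f (TT.op (.cv (a, a)) (wTT l t)) = wEv S ((a, true) :: l) (tEv S x f t)
      simp only [tEv]
      rw [hf, ih]
      rfl

def gTT (L : GW Q) (t : TT Q) : TT Q :=
  L.foldr (fun c t' =>
    wTT c.1 (.op (.cv c.2) (.ld (.cv (c.2.2, c.2.2)) (wTT (wInv c.1) t')))) t

lemma tEv_gTT_fst (L : GW Q) (t : TT Q) (x : Q) :
    tEv S x Prod.fst (gTT L t) = gEv S L (tEv S x Prod.fst t) := by
  induction L with
  | nil => rfl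
  | cons c L ih =>
    show tEv S x Prod.fst
      (wTT c.1 (.op (.cv c.2) (.ld (.cv (c.2.2, c.2.2)) (wTT (wInv c.1) (gTT L t))))) = _
    rw [tEv_wTT S _ _ _ _ (fun a => rfl)]
    simp only [tEv]
    rw [tEv_wTT S _ _ _ _ (fun a => rfl), ih]
    rfl

lemma tEv_gTT_snd (L : GW Q) (t : TT Q) (x : Q) :
    tEv S x Prod.snd (gTT L t) = tEv S x Prod.snd t := by
  induction L with
  | nil => rfl
  | cons c L ih =>
    show tEv S x Prod.snd
      (wTT c.1 (.op (.cv c.2) (.ld (.cv (c.2.2, c.2.2)) (wTT (wInv c.1) (gTT L t))))) = _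
    rw [tEv_wTT S _ _ _ _ (fun a => rfl)]
    simp only [tEv]
    rw [tEv_wTT S _ _ _ _ (fun a => rfl), ih]
    show wEv S c.1 (S.op c.2.2 (S.ld c.2.2 (wEv S (wInv c.1) (tEv S x Prod.snd t)))) = _
    rw [S.op_ld, wEv_wInv']

lemma gops_eq (k : Wd Q) (p q : Q) (v : Q) :
    gops S (k, p, q) v = wEv S k (S.op p (S.ld q (wEv S (wInv k) v))) := rfl

/-- Centrality: conjugating a `Dis_β`-generator by a displacement permutation is
`γ`-pointwise trivial. -/
lemma conj_gen {β γ : Setoid Q} (hcc : CC S β.r (fun _ _ => True) γ.r) {p q : Q}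
    (hpq : β.r p q) (k : Wd Q) (L : GW Q) (u : Q) :
    γ.r (gEv S L (gops S (k, p, q) (gEv S (gInv L) u))) (gops S (k, p, q) u) := by
  set t : TT Q := gTT L (wTT k (.op .pt (.ld (.cv (q, q))
    (wTT (wInv k) (gTT (gInv L) (.cv (u, u))))))) with ht
  have hfst : ∀ y : Q, tEv S y Prod.fst t
      = gEv S L (wEv S k (S.op y (S.ld q (wEv S (wInv k) (gEv S (gInv L) u))))) := by
    intro y
    rw [ht, tEv_gTT_fst, tEv_wTT S _ _ _ _ (fun a => rfl)]
    simp only [tEv]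
    rw [tEv_wTT S _ _ _ _ (fun a => rfl), tEv_gTT_fst]
    simp [tEv]
  have hsnd : ∀ y : Q, tEv S y Prod.snd t
      = wEv S k (S.op y (S.ld q (wEv S (wInv k) u))) := by
    intro y
    rw [ht, tEv_gTT_snd, tEv_wTT S _ _ _ _ (fun a => rfl)]
    simp only [tEv]
    rw [tEv_wTT S _ _ _ _ (fun a => rfl), tEv_gTT_snd]
    simp [tEv]
  have h1 : tEv S q Prod.fst t = u := by
    rw [hfst, S.op_ld, wEv_wInv']
    exact gEv_gInv' S L u
  have h2 : tEv S q Prod.snd t = u := by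
    rw [hsnd, S.op_ld]
    exact wEv_wInv' S k u
  have hres := ccT S hcc t (β.symm hpq) Prod.fst Prod.snd (by rw [h1, h2])
  rw [hfst, hsnd] at hres
  rw [gops_eq, gops_eq]
  exact hres

/-- Centrality: conjugating an element of `Dis_β` by a displacement permutation is
`γ`-pointwise trivial. -/
lemma conj_dis {β γ : Setoid Q} (hγ : S.IsCongruence γ)
    (hcc : CC S β.r (fun _ _ => True) γ.r) (L E : GW Q)
    (hE : ∀ c ∈ E, β.r c.2.1 c.2.2) (u : Q) :
    γ.r (gEv S L (gEv S E (gEv S (gInv L) u))) (gEv S E u) := by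
  induction E with
  | nil =>
    show γ.r (gEv S L (gEv S (gInv L) u)) u
    rw [gEv_gInv']
  | cons c E ih =>
    obtain ⟨k, p, q⟩ := c
    have hpq : β.r p q := by simpa using hE (k, p, q) (by simp)
    have hE' : ∀ c ∈ E, β.r c.2.1 c.2.2 := fun c hc => hE c (List.mem_cons_of_mem _ hc)
    have hih := ih hE'
    have hrw : gEv S E (gEv S (gInv L) u)
        = gEv S (gInv L) (gEv S L (gEv S E (gEv S (gInv L) u))) := by rw [gEv_gInv]
    have step1 := conj_gen S hcc hpq k L (gEv S L (gEv S E (gEv S (gInv L) u)))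
    rw [← hrw] at step1
    have step2 : γ.r (gops S (k, p, q) (gEv S L (gEv S E (gEv S (gInv L) u))))
        (gops S (k, p, q) (gEv S E u)) := gops_cong S hγ _ hih
    exact γ.trans step1 step2

/-- γ-triviality at one point transfers along β (for displacement words). -/
lemma star_transfer {β γ : Setoid Q} (hcc : CC S β.r (fun _ _ => True) γ.r) (L : GW Q)
    {x y : Q} (hxy : β.r x y) (h : γ.r (gEv S L x) x) : γ.r (gEv S L y) y := by
  have hfst : ∀ w : Q, tEv S w Prod.fst (gTT L .pt) = gEv S L w := fun w => by
    rw [tEv_gTT_fst]; rfl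
  have hsnd : ∀ w : Q, tEv S w Prod.snd (gTT L .pt) = w := fun w => by
    rw [tEv_gTT_snd]; rfl
  have hres := ccT S hcc (gTT L .pt) hxy Prod.fst Prod.snd (by rw [hfst, hsnd]; exact h)
  rwa [hfst, hsnd] at hres

lemma ld_self (hi : S.Idem) (y : Q) : S.ld y y = y := by
  have := S.ld_op y y
  rwa [hi y] at this

lemma class_subalg {β : Setoid Q} (hβ : S.IsCongruence β) (hi : S.Idem) (y : Q) :
    S.IsSubalgebra {z | β.r z y} := by
  intro z hz w hw
  constructor
  · show β.r (S.op z w) y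
    have := hβ.op_compat hz hw
    rwa [hi y] at this
  · show β.r (S.ld z w) y
    have := hβ.ld_compat hz hw
    rwa [ld_self S hi y] at this

lemma sub_lmlt_word {A : Set Q} (hA : S.IsSubalgebra A) {h : Equiv.Perm ↥A}
    (hh : h ∈ (S.subLQ A hA).LMlt) :
    ∃ l : Wd Q, (∀ ab ∈ l, ab.1 ∈ A) ∧ ∀ z : ↥A, (h z : Q) = wEv S l (z : Q) := by
  induction hh using Subgroup.closure_induction with
  | mem g hgen =>
    obtain ⟨a, rfl⟩ := hgen
    exact ⟨[((a : Q), true)], by simp [a.2], fun z => rfl⟩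
  | one => exact ⟨[], by simp, fun z => rfl⟩
  | mul a b _ _ ha hb =>
    obtain ⟨la, hla1, hla2⟩ := ha
    obtain ⟨lb, hlb1, hlb2⟩ := hb
    refine ⟨la ++ lb, ?_, fun z => ?_⟩
    · intro ab hab
      rcases List.mem_append.1 hab with hx | hx
      · exact hla1 ab hx
      · exact hlb1 ab hx
    · rw [wEv_append, ← hlb2, ← hla2]
      rfl
  | inv a _ ha =>
    obtain ⟨la, hla1, hla2⟩ := ha
    refine ⟨wInv la, ?_, fun z => ?_⟩
    · intro ab hab
      simp only [wInv, List.mem_reverse, List.mem_map] at hab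
      obtain ⟨ab', hab', rfl⟩ := hab
      exact hla1 ab' hab'
    · apply wEv_inj S la
      rw [wEv_wInv']
      have : (a (a⁻¹ z) : Q) = wEv S la ((a⁻¹ z : ↥A) : Q) := hla2 (a⁻¹ z)
      rw [Equiv.Perm.coe_inv, Equiv.apply_symm_apply] at this
      exact this.symm

lemma wEv_single_gops (ab : Q × Bool) (c : Wd Q × Q × Q) (w : Q) :
    wEv S [ab] (gops S c w) = gops S (ab :: c.1, c.2) (wEv S [ab] w) := by
  rcases c with ⟨k, p, q⟩
  show wEv S [ab] (wEv S k (S.op p (S.ld q (wEv S (wInv k) w))))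
    = wEv S (ab :: k) (S.op p (S.ld q (wEv S (wInv (ab :: k)) (wEv S [ab] w))))
  rw [wInv_cons, wEv_append, wEv_single_inv]
  rfl

lemma wEv_single_gEv (ab : Q × Bool) (L : GW Q) (w : Q) :
    wEv S [ab] (gEv S L w) = gEv S (L.map (fun c => (ab :: c.1, c.2))) (wEv S [ab] w) := by
  induction L with
  | nil => rfl
  | cons c L ih =>
    rw [gEv_cons, wEv_single_gops, ih]
    rfl

lemma wEv_fix_y (r : Wd Q) (y : Q) (hr : ∀ ab ∈ r, ab.1 = y) (hi : S.Idem) :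
    wEv S r y = y := by
  induction r with
  | nil => rfl
  | cons ab r ih =>
    have hih := ih (fun ab h => hr ab (List.mem_cons_of_mem _ h))
    have ha : ab.1 = y := hr ab List.mem_cons_self
    rcases ab with ⟨a, b⟩
    simp only at ha
    subst ha
    cases b
    · rw [wEv_cons, hih]
      show S.ld a a = a
      exact ld_self S hi a
    · rw [wEv_cons, hih]
      show S.op a a = a
      exact hi a

lemma word_to_gw {β : Setoid Q} (y : Q) (l : Wd Q)
    (hl : ∀ ab ∈ l, β.r ab.1 y) :
    ∃ L : GW Q, (∀ c ∈ L, β.r c.2.1 c.2.2) ∧ ∃ r : Wd Q, (∀ ab ∈ r, ab.1 = y) ∧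
      ∀ v, wEv S l v = gEv S L (wEv S r v) := by
  induction l with
  | nil => exact ⟨[], by simp, [], by simp, fun v => rfl⟩
  | cons ab l ih =>
    obtain ⟨L, hL, r, hr, heq⟩ := ih (fun ab h => hl ab (List.mem_cons_of_mem _ h))
    have hay : β.r ab.1 y := hl ab List.mem_cons_self
    rcases ab with ⟨a, b⟩
    simp only at hay
    have hL' : ∀ c ∈ L.map (fun c => ((a, b) :: c.1, c.2)), β.r c.2.1 c.2.2 := by
      intro c hc
      simp only [List.mem_map] at hc
      obtain ⟨c', hc', rfl⟩ := hc
      exact hL c' hc'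
    cases b
    · refine ⟨L.map (fun c => ((a, false) :: c.1, c.2)) ++ [([(y, false)], y, a)],
        ?_, (y, false) :: r, ?_, fun v => ?_⟩
      · intro c hc
        rcases List.mem_append.1 hc with hx | hx
        · exact hL' c hx
        · simp only [List.mem_singleton] at hx
          subst hx
          exact β.symm hay
      · intro ab hab
        rcases List.mem_cons.1 hab with hx | hx
        · rw [hx]
        · exact hr ab hx
      · have e1 : wEv S ((a, false) :: l) v = wEv S [(a, false)] (gEv S L (wEv S r v)) := by
          rw [wEv_cons, heq]
        rw [e1, wEv_single_gEv]
        have e2 : ∀ w, wEv S [(a, false)] w = gops S ([(y, false)], y, a) (wEv S [(y, false)] w) := by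
          intro w
          show S.ld a w = S.ld y (S.op y (S.ld a (S.op y (S.ld y w))))
          rw [S.op_ld, S.ld_op]
        rw [e2, gEv_append]
        rfl
    · refine ⟨L.map (fun c => ((a, true) :: c.1, c.2)) ++ [([], a, y)],
        ?_, (y, true) :: r, ?_, fun v => ?_⟩
      · intro c hc
        rcases List.mem_append.1 hc with hx | hx
        · exact hL' c hx
        · simp only [List.mem_singleton] at hx
          subst hx
          exact hay
      · intro ab hab
        rcases List.mem_cons.1 hab with hx | hx
        · rw [hx]
        · exact hr ab hx
      · have e1 : wEv S ((a, true) :: l) v = wEv S [(a, true)] (gEv S L (wEv S r v)) := by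
          rw [wEv_cons, heq]
        rw [e1, wEv_single_gEv]
        have e2 : ∀ w, wEv S [(a, true)] w = gops S ([], a, y) (wEv S [(y, true)] w) := by
          intro w
          show S.op a w = S.op a (S.ld y (S.op y w))
          rw [S.ld_op]
        rw [e2, gEv_append]
        rfl

lemma orbit_lemma (hi : S.Idem) (hsc : S.Superconnected) {β : Setoid Q}
    (hβ : S.IsCongruence β) {x y : Q} (hxy : β.r x y) :
    ∃ L : GW Q, (∀ c ∈ L, β.r c.2.1 c.2.2) ∧ gEv S L y = x := by
  have hA := class_subalg S hβ hi y
  obtain ⟨h, hh, he⟩ := hsc _ hA ⟨x, hxy⟩ ⟨y, β.refl y⟩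
  obtain ⟨l, hl1, hl2⟩ := sub_lmlt_word S hA hh
  have hwl : wEv S l y = x := by
    have h2 := hl2 ⟨y, β.refl y⟩
    rw [he] at h2
    exact h2.symm
  obtain ⟨L, hL, r, hr, heq⟩ := word_to_gw S y l (fun ab hab => hl1 ab hab)
  refine ⟨L, hL, ?_⟩
  have := heq y
  rw [wEv_fix_y S r y hr hi] at this
  rw [← this, hwl]

/-- KEY LEMMA: commutators of `β`-kernel displacements are `γ`-trivial pointwise. -/
lemma key_comm {β γ : Setoid Q} (hβ : S.IsCongruence β) (hγ : S.IsCongruence γ)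
    (hcc : CC S β.r (fun _ _ => True) γ.r) (hi : S.Idem) (hsc : S.Superconnected)
    {g h : Equiv.Perm Q} (hgD : g ∈ S.Dis) (hhD : h ∈ S.Dis)
    (hgk : ∀ x, β.r (g x) x) (hhk : ∀ x, β.r (h x) x) :
    ∀ u, γ.r (⁅g, h⁆ u) u := by
  have main : ∀ v, γ.r (g (h v)) (h (g v)) := by
    intro v
    obtain ⟨Lg, -, hLg⟩ := disRel_word S (fun _ _ _ => trivial) hgD
    obtain ⟨Lh, -, hLh⟩ := disRel_word S (fun _ _ _ => trivial) hhD
    obtain ⟨E, hE, hEv⟩ := orbit_lemma S hi hsc hβ (hhk v)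
    have hginv : gEv S (gInv Lg) (g v) = v := by rw [hLg v, gEv_gInv]
    have s3 := conj_dis S hγ hcc Lg E hE (g v)
    rw [hginv, hEv] at s3
    rw [← hLg (h v)] at s3
    -- s3 : γ.r (g (h v)) (gEv S E (g v))
    have hWv : gEv S (gInv Lh ++ E) v = v := by
      rw [gEv_append, hEv, ← gEv_inv_of S hLh (h v), Equiv.Perm.coe_inv, Equiv.symm_apply_apply]
    have hat_v : γ.r (gEv S (gInv Lh ++ E) v) v := by rw [hWv]
    have hat_gv := star_transfer S hcc (gInv Lh ++ E) (β.symm (hgk v)) hat_v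
    have hWgv : gEv S (gInv Lh ++ E) (g v) = h⁻¹ (gEv S E (g v)) := by
      rw [gEv_append, ← gEv_inv_of S hLh]
    rw [hWgv] at hat_gv
    -- hat_gv : γ.r (h⁻¹ (gEv S E (g v))) (g v)
    have s4 := gEv_cong S hγ Lh hat_gv
    rw [← hLh (h⁻¹ (gEv S E (g v))), Equiv.Perm.coe_inv, Equiv.apply_symm_apply, ← hLh (g v)] at s4
    exact γ.trans s3 s4
  intro u
  have hm := main (g⁻¹ (h⁻¹ u))
  have e1 : ⁅g, h⁆ u = g (h (g⁻¹ (h⁻¹ u))) := by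
    simp [commutatorElement_def, Equiv.Perm.mul_apply]
  have e2 : h (g (g⁻¹ (h⁻¹ u))) = u := by
    rw [Equiv.Perm.coe_inv, Equiv.Perm.coe_inv, Equiv.apply_symm_apply, Equiv.apply_symm_apply]
  rw [e2] at hm
  rw [e1]
  exact hm

end Stmt18Aux

end Stmt18Aux

/-- a superconnected idempotent left quasigroup that is nilpotent of
length `n` has solvable displacement group of derived length at most `n`. -/
theorem stmt18 {Q : Type*} (S : LeftQuasigroup Q) (hi : S.Idem) (hsc : S.Superconnected)
    (n : ℕ) (hn : S.NilpotentLength n) :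
    derivedSeries ↥S.Dis n = ⊥ := by
  classical
  obtain ⟨c, hcong, hc0, hcentr, hcn⟩ := hn
  have main : ∀ m : ℕ, m ≤ n → ∀ g ∈ derivedSeries ↥S.Dis m,
      ∀ x : Q, (c (n - m)).r ((g : Equiv.Perm Q) x) x := by
    intro m
    induction m with
    | zero => intro _ g _ x; exact hcn _ _
    | succ m ih =>
      intro hm g hg x
      have hmn : m ≤ n := by omega
      have harith : n - m = n - (m + 1) + 1 := by omega
      have hcc : CC S (c (n - m)).r (fun _ _ => True) (c (n - (m + 1))).r := by
        apply (hcentr (n - (m + 1)) (c (n - m)) (hcong _)).mpr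
        rw [← harith]
      have hle : derivedSeries ↥S.Dis (m + 1)
          ≤ Subgroup.comap S.Dis.subtype (kerRel (c (n - (m + 1)))) := by
        rw [derivedSeries_succ, Subgroup.commutator_le]
        intro a ha b hb
        rw [Subgroup.mem_comap]
        have hker : ∀ (gp : Equiv.Perm Q),
            (∀ y : Q, (c (n - (m + 1))).r (gp y) y) → gp ∈ kerRel (c (n - (m + 1))) :=
          fun gp hp => hp
        apply hker
        have hco : (S.Dis.subtype ⁅a, b⁆ : Equiv.Perm Q)
            = ⁅(a : Equiv.Perm Q), (b : Equiv.Perm Q)⁆ := rfl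
        rw [hco]
        exact Stmt18Aux.key_comm S (hcong _) (hcong _) hcc hi hsc a.2 b.2
          (ih hmn a ha) (ih hmn b hb)
      have hmem := hle hg
      rw [Subgroup.mem_comap] at hmem
      exact hmem x
  apply (Subgroup.eq_bot_iff_forall _).mpr
  intro g hg
  have hx : ∀ x : Q, (c 0).r ((g : Equiv.Perm Q) x) x := by
    have := main n le_rfl g hg
    rwa [Nat.sub_self] at this
  have hone : (g : Equiv.Perm Q) = 1 := by
    apply Equiv.ext
    intro x
    have := (hc0 _ _).1 (hx x)
    simpa using this
  exact Subtype.ext hone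
end
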